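/- Let μ be any Möbius function for 𝒢 and let a, n, k be positive integers. Then: (i) μ(H, B_{k^n}) = 0 for every finite simple graph H with |H| < kn − 1; and (ii) if n(k − 1) ≥ 2, then μ(K_{a+n}, B_{1^a,k^n}) = 0. -/

import Mathlib

open SimpleGraph

/-- A finite simple graph, encoded by its number of vertices together with a
simple graph structure on `Fin n`. -/
def FinGraph : Type := Σ n : ℕ, SimpleGraph (Fin n)

namespace FinGraph

/-- The number of vertices of a graph. -/
def order (G : FinGraph) : ℕ := G.1

/-- Induced containment `H ⊴ G`: there is an injection of the vertices of `H`
into the vertices of `G` which preserves and reflects adjacency (equivalently,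
`H` is isomorphic to an induced subgraph of `G`). -/
def Contains (H G : FinGraph) : Prop :=
  ∃ f : Fin H.1 ↪ Fin G.1, ∀ a b : Fin H.1, G.2.Adj (f a) (f b) ↔ H.2.Adj a b

/-- Isomorphism of finite graphs. -/
def Iso (H G : FinGraph) : Prop := Nonempty (H.2 ≃g G.2)

/-- Package a simple graph on an arbitrary finite vertex type as a `FinGraph`. -/
noncomputable def of {V : Type} [Fintype V] (G : SimpleGraph V) : FinGraph :=
  ⟨Fintype.card V, G.comap ⇑(Fintype.equivFin V).symm⟩

end FinGraph

namespace FinGraph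

lemma iso_refl (G : FinGraph) : G.Iso G := ⟨SimpleGraph.Iso.refl⟩
lemma iso_symm {G H : FinGraph} (h : G.Iso H) : H.Iso G := ⟨h.some.symm⟩
lemma iso_trans {F G H : FinGraph} (h : F.Iso G) (h' : G.Iso H) : F.Iso H :=
  ⟨h.some.trans h'.some⟩

lemma contains_refl (G : FinGraph) : G.Contains G :=
  ⟨Function.Embedding.refl _, fun _ _ => Iff.rfl⟩

lemma contains_trans {F G H : FinGraph} (h : F.Contains G) (h' : G.Contains H) :
    F.Contains H := by
  obtain ⟨f, hf⟩ := h; obtain ⟨g, hg⟩ := h'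
  exact ⟨f.trans g, fun a b => (hg _ _).trans (hf _ _)⟩

lemma contains_of_iso {G H : FinGraph} (h : G.Iso H) : G.Contains H := by
  obtain ⟨e⟩ := h
  exact ⟨e.toEquiv.toEmbedding, fun a b => e.map_rel_iff⟩

lemma order_le_of_contains {G H : FinGraph} (h : G.Contains H) : G.1 ≤ H.1 := by
  obtain ⟨f, _⟩ := h
  simpa using Fintype.card_le_of_embedding f

lemma order_eq_of_iso {G H : FinGraph} (h : G.Iso H) : G.1 = H.1 := by
  obtain ⟨e⟩ := h
  simpa using Fintype.card_congr e.toEquiv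

lemma iso_of_contains_order_eq {G H : FinGraph} (h : G.Contains H) (he : G.1 = H.1) :
    G.Iso H := by
  obtain ⟨f, hf⟩ := h
  have hb : Function.Bijective f := by
    rw [Fintype.bijective_iff_injective_and_card]
    exact ⟨f.injective, by simp [he]⟩
  exact ⟨⟨Equiv.ofBijective f hb, fun {a b} => hf a b⟩⟩

lemma contains_congr_left {H H' G : FinGraph} (h : H.Iso H') (hc : H.Contains G) :
    H'.Contains G := contains_trans (contains_of_iso (iso_symm h)) hc

lemma contains_congr_right {H G G' : FinGraph} (h : G.Iso G') (hc : H.Contains G) :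
    H.Contains G' := contains_trans hc (contains_of_iso h)

def isoSetoid : Setoid FinGraph :=
  ⟨Iso, ⟨iso_refl, fun h => iso_symm h, fun h h' => iso_trans h h'⟩⟩

noncomputable def rep (X : FinGraph) : FinGraph :=
  (@Quotient.mk _ isoSetoid X).out

lemma rep_iso (X : FinGraph) : (rep X).Iso X := @Quotient.mk_out _ isoSetoid X

lemma rep_eq {X Y : FinGraph} (h : X.Iso Y) : rep X = rep Y := by
  unfold rep
  rw [@Quotient.sound _ isoSetoid _ _ h]

lemma mem_of_iso_of {V : Type} [Fintype V] (K : SimpleGraph V) :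
    Nonempty ((FinGraph.of K).2 ≃g K) :=
  ⟨SimpleGraph.Iso.comap (Fintype.equivFin V).symm K⟩

lemma order_of {V : Type} [Fintype V] (K : SimpleGraph V) :
    (FinGraph.of K).1 = Fintype.card V := rfl

lemma contains_of {V : Type} [Fintype V] (K : SimpleGraph V) (X : FinGraph)
    (f : Fin X.1 ↪ V) (hf : ∀ a b, K.Adj (f a) (f b) ↔ X.2.Adj a b) :
    X.Contains (FinGraph.of K) := by
  obtain ⟨e⟩ := mem_of_iso_of K
  refine ⟨f.trans e.symm.toEquiv.toEmbedding, fun a b => ?_⟩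
  calc (FinGraph.of K).2.Adj (e.symm (f a)) (e.symm (f b))
      ↔ K.Adj (f a) (f b) := e.symm.map_rel_iff
    _ ↔ X.2.Adj a b := hf a b

lemma of_contains {V : Type} [Fintype V] (K : SimpleGraph V) (Y : FinGraph)
    (f : V ↪ Fin Y.1) (hf : ∀ a b, Y.2.Adj (f a) (f b) ↔ K.Adj a b) :
    (FinGraph.of K).Contains Y := by
  obtain ⟨e⟩ := mem_of_iso_of K
  refine ⟨e.toEquiv.toEmbedding.trans f, fun a b => ?_⟩
  exact (hf _ _).trans e.map_rel_iff

lemma contains_of_elim {V : Type} [Fintype V] (K : SimpleGraph V) (X : FinGraph)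
    (h : X.Contains (FinGraph.of K)) :
    ∃ f : Fin X.1 ↪ V, ∀ a b, K.Adj (f a) (f b) ↔ X.2.Adj a b := by
  obtain ⟨e⟩ := mem_of_iso_of K
  obtain ⟨f, hf⟩ := h
  refine ⟨f.trans e.toEquiv.toEmbedding, fun a b => ?_⟩
  exact (e.map_rel_iff).trans (hf a b)


end FinGraph

/-- `T` is a transversal of the interval `[H,G]`: every member lies in `[H,G]`,
distinct members are non-isomorphic, and every graph in `[H,G]` is isomorphic to
a member of `T`. -/
def IsTransversal (H G : FinGraph) (T : Finset FinGraph) : Prop :=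
  (∀ X ∈ T, H.Contains X ∧ X.Contains G) ∧
  (∀ X ∈ T, ∀ Y ∈ T, X ≠ Y → ¬ X.Iso Y) ∧
  (∀ X : FinGraph, H.Contains X → X.Contains G → ∃ Y ∈ T, X.Iso Y)

open FinGraph in
lemma exists_transversal (H G : FinGraph) : ∃ T : Finset FinGraph, IsTransversal H G T := by
  classical
  let S : Finset FinGraph :=
    (((Finset.range (G.1 + 1)).sigma fun m => (Finset.univ : Finset (SimpleGraph (Fin m)))).filter
      fun X => H.Contains X ∧ X.Contains G)
  have hmemS : ∀ X : FinGraph, H.Contains X → X.Contains G → X ∈ S := by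
    rintro ⟨m, g⟩ h1 h2
    refine Finset.mem_filter.2 ⟨Finset.mem_sigma.2 ⟨?_, Finset.mem_univ _⟩, h1, h2⟩
    exact Finset.mem_range.2 (Nat.lt_succ_of_le (order_le_of_contains h2))
  refine ⟨S.image rep, ?_, ?_, ?_⟩
  · intro X hX
    obtain ⟨Z, hZ, rfl⟩ := Finset.mem_image.1 hX
    obtain ⟨_, h1, h2⟩ := Finset.mem_filter.1 hZ
    exact ⟨contains_trans h1 (contains_of_iso (iso_symm (rep_iso Z))),
      contains_trans (contains_of_iso (rep_iso Z)) h2⟩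
  · intro X hX Y hY hne hiso
    obtain ⟨Z, _, rfl⟩ := Finset.mem_image.1 hX
    obtain ⟨W, _, rfl⟩ := Finset.mem_image.1 hY
    exact hne (rep_eq (iso_trans (iso_trans (iso_symm (rep_iso Z)) hiso) (rep_iso W)))
  · intro X h1 h2
    exact ⟨rep X, Finset.mem_image_of_mem rep (hmemS X h1 h2), iso_symm (rep_iso X)⟩

/-- `mu` is a Möbius function for the poset `𝒢` of all finite simple graphs up to
isomorphism, ordered by induced containment: it is isomorphism invariant, vanishes
on non-comparable pairs, and for every `H ⊴ G` the sum of `mu H ·` over any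
transversal of `[H,G]` is `1` if `H ≅ G` and `0` otherwise. -/
def IsMobius (mu : FinGraph → FinGraph → ℤ) : Prop :=
  (∀ H H' G G' : FinGraph, H.Iso H' → G.Iso G' → mu H G = mu H' G') ∧
  (∀ H G : FinGraph, ¬ H.Contains G → mu H G = 0) ∧
  (∀ H G : FinGraph, H.Contains G → ∀ T : Finset FinGraph, IsTransversal H G T →
    (H.Iso G → ∑ X ∈ T, mu H X = 1) ∧ (¬ H.Iso G → ∑ X ∈ T, mu H X = 0))

open FinGraph in
lemma mu_eq_zero_of_coatom (mu : FinGraph → FinGraph → ℤ) (hmu : IsMobius mu)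
    (H G C : FinGraph) (hHG : H.Contains G) (hHC : H.Contains C) (hCG : C.Contains G)
    (hHG' : ¬ H.Iso G) (hHC' : ¬ H.Iso C) (hCGlt : C.1 < G.1)
    (hkey : ∀ X : FinGraph, H.Contains X → X.Contains G → ¬ X.Iso G → X.Contains C) :
    mu H G = 0 := by
  classical
  obtain ⟨T, hT1, hT2, hT3⟩ := exists_transversal H G
  obtain ⟨Y, hYT, hYiso⟩ := hT3 G hHG (contains_refl G)
  -- hYiso : G.Iso Y
  have hnotG : ∀ X ∈ T.erase Y, ¬ X.Iso G := by
    intro X hX hiso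
    exact hT2 X (Finset.mem_of_mem_erase hX) Y hYT (Finset.ne_of_mem_erase hX)
      (iso_trans hiso hYiso)
  have hT' : IsTransversal H C (T.erase Y) := by
    refine ⟨?_, ?_, ?_⟩
    · intro X hX
      obtain ⟨h1, h2⟩ := hT1 X (Finset.mem_of_mem_erase hX)
      exact ⟨h1, hkey X h1 h2 (hnotG X hX)⟩
    · intro X hX Y' hY' hne
      exact hT2 X (Finset.mem_of_mem_erase hX) Y' (Finset.mem_of_mem_erase hY') hne
    · intro Z h1 h2
      obtain ⟨Y', hY'T, hY'iso⟩ := hT3 Z h1 (contains_trans h2 hCG)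
      refine ⟨Y', Finset.mem_erase.2 ⟨?_, hY'T⟩, hY'iso⟩
      rintro rfl
      have : Z.1 = G.1 := order_eq_of_iso (iso_trans hY'iso (iso_symm hYiso))
      have : Z.1 ≤ C.1 := order_le_of_contains h2
      omega
  have hsumG : ∑ X ∈ T, mu H X = 0 := (hmu.2.2 H G hHG T ⟨hT1, hT2, hT3⟩).2 hHG'
  have hsumC : ∑ X ∈ T.erase Y, mu H X = 0 := (hmu.2.2 H C hHC _ hT').2 hHC'
  have hsplit : mu H Y + ∑ X ∈ T.erase Y, mu H X = ∑ X ∈ T, mu H X :=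
    Finset.add_sum_erase T _ hYT
  have hmuY : mu H G = mu H Y := hmu.1 H H G Y (iso_refl H) hYiso
  omega

/-- `B_{k^n}`: the complete multipartite graph with `n` parts of size `k`. -/
noncomputable def completeMultipartiteKN (n k : ℕ) : FinGraph :=
  FinGraph.of ((⊤ : SimpleGraph (Fin n)).comap (Prod.fst : Fin n × Fin k → Fin n))

/-- `B_{1^a,k^n}`: the complete multipartite graph with `a` parts of size `1`
and `n` parts of size `k`. -/
noncomputable def completeMultipartiteAKN (a n k : ℕ) : FinGraph :=
  FinGraph.of ((⊤ : SimpleGraph (Fin a ⊕ Fin n)).comap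
    (Sum.map id Prod.fst : Fin a ⊕ Fin n × Fin k → Fin a ⊕ Fin n))

open FinGraph

lemma of_contains_of {V W : Type} [Fintype V] [Fintype W] (K : SimpleGraph V)
    (L : SimpleGraph W) (f : V ↪ W) (hf : ∀ a b, L.Adj (f a) (f b) ↔ K.Adj a b) :
    (FinGraph.of K).Contains (FinGraph.of L) := by
  obtain ⟨e⟩ := mem_of_iso_of K
  refine contains_of L (FinGraph.of K) (e.toEquiv.toEmbedding.trans f) fun x y => ?_
  exact (hf _ _).trans e.map_rel_iff

section PartI

variable (n k : ℕ) (hn : 0 < n) (hk : 0 < k)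

noncomputable abbrev KnGraph : SimpleGraph (Fin n × Fin k) :=
  (⊤ : SimpleGraph (Fin n)).comap (Prod.fst : Fin n × Fin k → Fin n)

lemma knAdj (u v : Fin n × Fin k) : (KnGraph n k).Adj u v ↔ u.1 ≠ v.1 := by
  simp [KnGraph]

noncomputable def vzero : Fin n × Fin k := (⟨0, hn⟩, ⟨0, hk⟩)

noncomputable def CKN : FinGraph :=
  FinGraph.of ((KnGraph n k).induce {v | v ≠ vzero n k hn hk})

lemma CKN_order : (CKN n k hn hk).1 = n * k - 1 := by
  rw [CKN, order_of]
  have : Fintype.card {v : Fin n × Fin k // v ≠ vzero n k hn hk} = n * k - 1 := by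
    rw [Fintype.card_subtype_compl (· = vzero n k hn hk)]
    simp
  simp only [Set.coe_setOf] at this ⊢
  exact this

lemma CKN_contains : (CKN n k hn hk).Contains (completeMultipartiteKN n k) := by
  rw [CKN, completeMultipartiteKN]
  refine of_contains_of _ _ (Function.Embedding.subtype _) fun x y => ?_
  simp [comap_adj]

lemma key_i (X : FinGraph) (hc : X.Contains (completeMultipartiteKN n k))
    (hlt : X.1 < n * k) : X.Contains (CKN n k hn hk) := by
  obtain ⟨f, hf⟩ := contains_of_elim _ X hc
  have hns : ¬ Function.Surjective f := by
    intro hs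
    have := Fintype.card_le_of_surjective f hs
    simp at this
    omega
  unfold Function.Surjective at hns
  push_neg at hns
  obtain ⟨w, hw⟩ := hns
  set v0 := vzero n k hn hk with hv0
  set e : (Fin n × Fin k) ≃ (Fin n × Fin k) :=
    (Equiv.swap w.1 v0.1).prodCongr (Equiv.swap w.2 v0.2) with he
  have hew : e w = v0 := by
    simp [he, Equiv.prodCongr_apply, Prod.map, hv0]
  have hadj : ∀ u v, (KnGraph n k).Adj (e u) (e v) ↔ (KnGraph n k).Adj u v := by
    intro u v
    rw [knAdj, knAdj]
    simp [he, Equiv.prodCongr_apply, (Equiv.swap w.1 v0.1).injective.ne_iff]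
  have hne : ∀ i, e (f i) ≠ v0 := by
    intro i h
    exact hw i (e.injective (h.trans hew.symm))
  refine contains_of _ X
    ⟨fun i => ⟨e (f i), hne i⟩, fun i j h => f.injective (e.injective (Subtype.ext_iff.1 h))⟩
    fun x y => ?_
  exact (hadj (f x) (f y)).trans (hf x y)

lemma KN_order : (completeMultipartiteKN n k).1 = n * k := by
  rw [completeMultipartiteKN, order_of]; simp

end PartI

lemma part_i (mu : FinGraph → FinGraph → ℤ) (hmu : IsMobius mu) (n k : ℕ)
    (hn : 0 < n) (hk : 0 < k) (H : FinGraph) (hH : H.order + 1 < k * n) :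
    mu H (completeMultipartiteKN n k) = 0 := by
  have hcomm : k * n = n * k := Nat.mul_comm k n
  have hpos : 0 < n * k := Nat.mul_pos hn hk
  have hHo : H.1 + 1 < n * k := by unfold order at hH; omega
  have hKo := KN_order n k
  have hCo := CKN_order n k hn hk
  by_cases hc : H.Contains (completeMultipartiteKN n k)
  · refine mu_eq_zero_of_coatom mu hmu H _ (CKN n k hn hk) hc
      (key_i n k hn hk H hc (by omega)) (CKN_contains n k hn hk)
      (fun h => by have := order_eq_of_iso h; omega)
      (fun h => by have := order_eq_of_iso h; omega)
      (by omega) ?_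
    intro X h1 h2 h3
    have hle := order_le_of_contains h2
    have hne : X.1 ≠ (completeMultipartiteKN n k).1 :=
      fun h => h3 (iso_of_contains_order_eq h2 h)
    exact key_i n k hn hk X h2 (by omega)
  · exact hmu.2.1 H _ hc

section PartII

variable (a n k : ℕ) (ha : 0 < a) (hn : 0 < n) (hk2 : 1 < k)

noncomputable abbrev KaGraph : SimpleGraph (Fin a ⊕ Fin n × Fin k) :=
  (⊤ : SimpleGraph (Fin a ⊕ Fin n)).comap (Sum.map id Prod.fst)

lemma kaAdj (u v : Fin a ⊕ Fin n × Fin k) :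
    (KaGraph a n k).Adj u v ↔ Sum.map id Prod.fst u ≠ Sum.map id Prod.fst v := by
  simp [KaGraph]

noncomputable def vzero2 : Fin a ⊕ Fin n × Fin k := Sum.inr (⟨0, hn⟩, ⟨1, hk2⟩)

noncomputable def CAKN : FinGraph :=
  FinGraph.of ((KaGraph a n k).induce {v | v ≠ vzero2 a n k hn hk2})

lemma AKN_order : (completeMultipartiteAKN a n k).1 = a + n * k := by
  rw [completeMultipartiteAKN, order_of]; simp

lemma CAKN_order : (CAKN a n k hn hk2).1 = a + n * k - 1 := by
  rw [CAKN, order_of]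
  have : Fintype.card {v : Fin a ⊕ Fin n × Fin k // v ≠ vzero2 a n k hn hk2}
      = a + n * k - 1 := by
    rw [Fintype.card_subtype_compl (· = vzero2 a n k hn hk2)]
    simp
  simp only [Set.coe_setOf] at this ⊢
  exact this

lemma CAKN_contains : (CAKN a n k hn hk2).Contains (completeMultipartiteAKN a n k) := by
  rw [CAKN, completeMultipartiteAKN]
  refine of_contains_of _ _ (Function.Embedding.subtype _) fun x y => ?_
  simp [comap_adj]

lemma clique_embed (x : Fin (a + n)) :
    Sum.map id Prod.fst
      (Sum.map id (fun j => (j, (⟨0, Nat.lt_trans Nat.one_pos hk2⟩ : Fin k)))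
        (finSumFinEquiv.symm x) : Fin a ⊕ Fin n × Fin k) = finSumFinEquiv.symm x := by
  cases h : finSumFinEquiv.symm x <;> simp [h]

include hn hk2 in
lemma clique_contains :
    FinGraph.Contains ⟨a + n, (⊤ : SimpleGraph (Fin (a + n)))⟩
      (completeMultipartiteAKN a n k) := by
  rw [completeMultipartiteAKN]
  set q1 : Fin k := ⟨0, Nat.lt_trans Nat.one_pos hk2⟩ with hq1
  set f0 : Fin (a + n) → Fin a ⊕ Fin n × Fin k :=
    fun x => Sum.map id (fun j => (j, q1)) (finSumFinEquiv.symm x) with hf0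
  have hπ : ∀ x, Sum.map id Prod.fst (f0 x) = finSumFinEquiv.symm x :=
    clique_embed a n k hk2
  have hinj : Function.Injective f0 := by
    intro x y h
    have := congrArg (Sum.map id Prod.fst) h
    rw [hπ, hπ] at this
    exact finSumFinEquiv.symm.injective this
  refine contains_of _ _ ⟨f0, hinj⟩ fun x y => ?_
  rw [kaAdj]
  simp only [Function.Embedding.coeFn_mk, hπ]
  rw [finSumFinEquiv.symm.injective.ne_iff]
  exact (top_adj x y).symm

lemma clique_contains_C :
    FinGraph.Contains ⟨a + n, (⊤ : SimpleGraph (Fin (a + n)))⟩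
      (CAKN a n k hn hk2) := by
  rw [CAKN]
  set q1 : Fin k := ⟨0, Nat.lt_trans Nat.one_pos hk2⟩ with hq1
  set f0 : Fin (a + n) → Fin a ⊕ Fin n × Fin k :=
    fun x => Sum.map id (fun j => (j, q1)) (finSumFinEquiv.symm x) with hf0
  have hπ : ∀ x, Sum.map id Prod.fst (f0 x) = finSumFinEquiv.symm x :=
    clique_embed a n k hk2
  have hinj : Function.Injective f0 := by
    intro x y h
    have := congrArg (Sum.map id Prod.fst) h
    rw [hπ, hπ] at this
    exact finSumFinEquiv.symm.injective this
  have hne : ∀ x, f0 x ≠ vzero2 a n k hn hk2 := by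
    intro x h
    rw [hf0] at h
    cases hx : finSumFinEquiv.symm x with
    | inl t => simp [hx, vzero2] at h
    | inr j => simp [hx, vzero2, hq1, Prod.ext_iff, Fin.ext_iff] at h
  refine contains_of _ _
    ⟨fun x => ⟨f0 x, hne x⟩, fun x y h => hinj (Subtype.ext_iff.1 h)⟩ fun x y => ?_
  have : ((KaGraph a n k).induce {v | v ≠ vzero2 a n k hn hk2}).Adj ⟨f0 x, hne x⟩ ⟨f0 y, hne y⟩
      ↔ (KaGraph a n k).Adj (f0 x) (f0 y) := Iff.rfl
  change ((KaGraph a n k).induce {v | v ≠ vzero2 a n k hn hk2}).Adj ⟨f0 x, hne x⟩ ⟨f0 y, hne y⟩ ↔ _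
  rw [this, kaAdj, hπ, hπ, finSumFinEquiv.symm.injective.ne_iff]
  exact (top_adj x y).symm

lemma key_ii (X : FinGraph)
    (hH : FinGraph.Contains ⟨a + n, (⊤ : SimpleGraph (Fin (a + n)))⟩ X)
    (hc : X.Contains (completeMultipartiteAKN a n k)) (hlt : X.1 < a + n * k) :
    X.Contains (CAKN a n k hn hk2) := by
  obtain ⟨f, hf⟩ := contains_of_elim _ X hc
  have hns : ¬ Function.Surjective f := by
    intro hs
    have := Fintype.card_le_of_surjective f hs
    simp at this
    omega
  unfold Function.Surjective at hns
  push_neg at hns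
  obtain ⟨w, hw⟩ := hns
  rcases w with s | w'
  · -- impossible: X contains a clique of size a+n but misses only singleton vertices
    exfalso
    obtain ⟨g, hg⟩ := hH
    have hval : ∀ x : Fin (a + n), Sum.map id Prod.fst (f (g x)) ≠ Sum.inl s := by
      intro x hx
      cases hfx : f (g x) with
      | inl t =>
        rw [hfx] at hx
        simp only [Sum.map_inl, id_eq, Sum.inl.injEq] at hx
        exact hw (g x) (by rw [hfx, hx])
      | inr p => rw [hfx] at hx; simp at hx
    set φ : Fin (a + n) → {y : Fin a ⊕ Fin n // y ≠ Sum.inl s} :=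
      fun x => ⟨Sum.map id Prod.fst (f (g x)), hval x⟩ with hφ
    have hφinj : Function.Injective φ := by
      intro x y hxy
      by_contra hne
      have hadj : X.2.Adj (g x) (g y) := (hg x y).2 (by simpa using hne)
      have h2 := (hf (g x) (g y)).2 hadj
      rw [kaAdj] at h2
      exact h2 (Subtype.ext_iff.1 hxy)
    have hcard := Fintype.card_le_of_injective φ hφinj
    have hcc : Fintype.card {y : Fin a ⊕ Fin n // y ≠ Sum.inl s} = a + n - 1 := by
      rw [Fintype.card_subtype_compl (· = Sum.inl s)]
      simp
    rw [hcc] at hcard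
    simp at hcard
    omega
  · set v0 := vzero2 a n k hn hk2 with hv0
    set σ : Equiv.Perm (Fin n) := Equiv.swap w'.1 ⟨0, hn⟩ with hσ
    set τ : Equiv.Perm (Fin k) := Equiv.swap w'.2 ⟨1, hk2⟩ with hτ
    set e2 : Equiv.Perm (Fin a ⊕ Fin n × Fin k) :=
      Equiv.sumCongr (Equiv.refl (Fin a)) (σ.prodCongr τ) with he2
    have he2w : e2 (Sum.inr w') = v0 := by
      simp [he2, hv0, vzero2, hσ, hτ, Equiv.prodCongr_apply, Prod.map]
    have hπe : ∀ u, Sum.map id Prod.fst (e2 u)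
        = Sum.map id σ (Sum.map id Prod.fst u) := by
      intro u
      cases u <;> simp [he2, Equiv.prodCongr_apply, Prod.map]
    have hadj : ∀ u v, (KaGraph a n k).Adj (e2 u) (e2 v) ↔ (KaGraph a n k).Adj u v := by
      intro u v
      rw [kaAdj, kaAdj, hπe, hπe,
        (Function.Injective.sumMap Function.injective_id σ.injective).ne_iff]
    have hne : ∀ i, e2 (f i) ≠ v0 := by
      intro i h
      exact hw i (e2.injective (h.trans he2w.symm))
    rw [CAKN]
    refine contains_of _ X
      ⟨fun i => ⟨e2 (f i), hne i⟩, fun i j h => f.injective (e2.injective (Subtype.ext_iff.1 h))⟩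
      fun x y => ?_
    exact (hadj (f x) (f y)).trans (hf x y)

end PartII

lemma part_ii (mu : FinGraph → FinGraph → ℤ) (hmu : IsMobius mu) (a n k : ℕ)
    (ha : 0 < a) (hn : 0 < n) (hk : 0 < k) (h2 : 2 ≤ n * (k - 1)) :
    mu ⟨a + n, (⊤ : SimpleGraph (Fin (a + n)))⟩ (completeMultipartiteAKN a n k) = 0 := by
  have hk2 : 1 < k := by
    rcases Nat.lt_or_ge k 2 with h | h
    · exfalso
      have : k - 1 = 0 := by omega
      rw [this, Nat.mul_zero] at h2
      omega
    · omega
  have hmul : n * (k - 1) + n = n * k := by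
    rw [← Nat.mul_succ]
    congr 1
    omega
  set H : FinGraph := ⟨a + n, (⊤ : SimpleGraph (Fin (a + n)))⟩ with hH
  have hHo : H.1 = a + n := rfl
  have hGo := AKN_order a n k
  have hCo := CAKN_order a n k hn hk2
  refine mu_eq_zero_of_coatom mu hmu H _ (CAKN a n k hn hk2)
    (clique_contains a n k hn hk2) (clique_contains_C a n k hn hk2)
    (CAKN_contains a n k hn hk2)
    (fun h => by have := order_eq_of_iso h; rw [hHo, hGo] at this; omega)
    (fun h => by have := order_eq_of_iso h; rw [hHo, hCo] at this; omega)
    (by omega) ?_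
  intro X hx1 hx2 hx3
  have hle := order_le_of_contains hx2
  have hne : X.1 ≠ (completeMultipartiteAKN a n k).1 :=
    fun h => hx3 (iso_of_contains_order_eq hx2 h)
  exact key_ii a n k hn hk2 X hx1 hx2 (by omega)


/-- `μ(H, B_{k^n}) = 0` for `|H| < kn - 1`, and `μ(K_{a+n}, B_{1^a,k^n}) = 0`
provided `n(k-1) ≥ 2`. -/
theorem mobius_completeMultipartite (mu : FinGraph → FinGraph → ℤ)
    (hmu : IsMobius mu) (a n k : ℕ) (ha : 0 < a) (hn : 0 < n) (hk : 0 < k) :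
    (∀ H : FinGraph, H.order + 1 < k * n → mu H (completeMultipartiteKN n k) = 0) ∧
    (2 ≤ n * (k - 1) →
      mu ⟨a + n, (⊤ : SimpleGraph (Fin (a + n)))⟩ (completeMultipartiteAKN a n k) = 0) := by
  exact ⟨fun H hH => part_i mu hmu n k hn hk H hH,
    fun h2 => part_ii mu hmu a n k ha hn hk h2⟩
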